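/- For any ultrafilter p on ℕ and any infinite word ω : ℕ → A over a finite alphabet, there exists a unique infinite word p*(ω) such that for every finite word u, u is a prefix of p*(ω) if and only if the set of occurrences of u in ω belongs to p. -/

import Mathlib

/-- The set of occurrences of the finite word `u` in the infinite word `x`. -/
def Occ {A : Type*} (x : ℕ → A) (u : List A) : Set ℕ :=
  {n | u = (List.range u.length).map fun i => x (n + i)}

/-- `u` is a prefix of the infinite word `x`. -/
def IsPref {A : Type*} (u : List A) (x : ℕ → A) : Prop :=
  u = (List.range u.length).map x

theorem stmt_1 {A : Type*} [Fintype A] (p : Ultrafilter ℕ) (ω : ℕ → A) :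
    ∃! ν : ℕ → A, ∀ u : List A, IsPref u ν ↔ Occ ω u ∈ p := by
  have key : ∀ n : ℕ, ∃ a : A, {m | ω (m + n) = a} ∈ p := by
    intro n
    obtain ⟨a, ha⟩ := Ultrafilter.eq_pure_of_finite (p.map fun m => ω (m + n))
    refine ⟨a, ?_⟩
    have : {a} ∈ p.map fun m => ω (m + n) := by rw [ha]; exact rfl
    exact this
  set ν : ℕ → A := fun n => (key n).choose with hν
  have hνmem : ∀ n, {m | ω (m + n) = ν n} ∈ p := fun n => (key n).choose_spec
  have main : ∀ u : List A, IsPref u ν ↔ Occ ω u ∈ p := by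
    intro u
    constructor
    · intro h
      have h2 : (⋂ i ∈ Finset.range u.length, {m | ω (m + i) = ν i}) ∈ p :=
        (Filter.biInter_mem (Finset.range u.length).finite_toSet).mpr
          (fun i _ => hνmem i)
      refine p.toFilter.mem_of_superset h2 ?_
      intro m hm
      simp only [Set.mem_iInter, Finset.mem_coe, Finset.mem_range, Set.mem_setOf_eq] at hm
      show u = (List.range u.length).map fun i => ω (m + i)
      rw [h]
      have hlen : (List.map ν (List.range u.length)).length = u.length := by simp
      rw [hlen]
      refine List.map_eq_map_iff.mpr ?_
      intro i hi
      exact (hm i (List.mem_range.mp hi)).symm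
    · intro h
      refine List.ext_getElem (by simp) ?_
      intro i hi hi'
      have h3 : (Occ ω u ∩ {m | ω (m + i) = ν i}).Nonempty :=
        Ultrafilter.nonempty_of_mem (p.toFilter.inter_mem h (hνmem i))
      obtain ⟨m, hm1, hm2⟩ := h3
      have hmo : u = (List.range u.length).map fun j => ω (m + j) := hm1
      have h4 := List.getElem_of_eq hmo hi
      simp only [List.getElem_map, List.getElem_range] at h4
      rw [h4, hm2]
      simp
  refine ⟨ν, main, ?_⟩
  intro ν' h'
  funext n
  have hu : IsPref ((List.range (n+1)).map ν') ν' := by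
    show _ = (List.range (List.length _)).map ν'
    simp
  have := (main _).mpr ((h' _).mp hu)
  have heq : (List.range (n+1)).map ν' = (List.range (n+1)).map ν := by
    have := this
    unfold IsPref at this
    simpa using this
  exact List.map_eq_map_iff.mp heq n (List.mem_range.mpr (Nat.lt_succ_self n))
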